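/- Let L: (ℓ^p)^m → ℝ be a continuous symmetric m-linear map with associated polynomial L̂, where 1 ≤ p < m. If x_1, ..., x_n are norm-one vectors in ℓ^p with pairwise disjoint supports and k_1,...,k_n are nonnegative integers summing to m, then |L(x_1^{k_1} ⋯ x_n^{k_n})| ≤ (n^{(m-p)/p} · m · 2^{m/2} Γ(m/2) · m^{m/2} / m!) · ‖L̂‖. -/

import Mathlib

open ENNReal

namespace Stmt17
open Finset



noncomputable def sg (b : Bool) : ℝ := cond b 1 (-1)

lemma sg_sq (b : Bool) : sg b * sg b = 1 := by cases b <;> simp [sg]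

lemma abs_sg (b : Bool) : |sg b| = 1 := by cases b <;> simp [sg]

lemma sum_sg_pow (d : ℕ) :
    ∑ b : Bool, sg b ^ (1 + d) = if Odd d then 2 else 0 := by
  have h : ∑ b : Bool, sg b ^ (1 + d) = 1 + (-1:ℝ) ^ (1+d) := by
    simp [sg, Fintype.sum_bool]
  rcases Nat.even_or_odd d with hd | hd
  · rw [h, if_neg (by simpa using hd),
      (by simpa [Nat.add_comm] using hd.add_one : Odd (1 + d)).neg_one_pow]
    norm_num
  · rw [h, if_pos hd,
      (by simpa [Nat.add_comm] using hd.add_one : Even (1 + d)).neg_one_pow]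
    norm_num

lemma sign_orthogonality (m : ℕ) (r : Fin m → Fin m) :
    ∑ ε : Fin m → Bool, (∏ i, sg (ε i)) * ∏ i, sg (ε (r i)) =
      if Function.Bijective r then (2 : ℝ) ^ m else 0 := by
  classical
  have key : ∀ ε : Fin m → Bool,
      (∏ i, sg (ε i)) * ∏ i, sg (ε (r i)) =
        ∏ j, sg (ε j) ^ (1 + (univ.filter fun i => r i = j).card) := by
    intro ε
    have h1 : ∏ i, sg (ε (r i)) = ∏ j, sg (ε j) ^ (univ.filter fun i => r i = j).card := by
      rw [← Finset.prod_fiberwise (univ : Finset (Fin m)) r (fun i => sg (ε (r i)))]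
      refine Finset.prod_congr rfl fun j _ => ?_
      have hc : ∀ i ∈ univ.filter (fun i => r i = j), sg (ε (r i)) = sg (ε j) := by
        intro i hi; simp only [mem_filter] at hi; rw [hi.2]
      rw [Finset.prod_congr rfl hc, Finset.prod_const]
    rw [h1, ← Finset.prod_mul_distrib]
    exact Finset.prod_congr rfl fun j _ => by rw [pow_add, pow_one]
  rw [Finset.sum_congr rfl fun ε _ => key ε]
  have hexp := (Finset.prod_univ_sum (fun _ : Fin m => (univ : Finset Bool))
    (fun j b => sg b ^ (1 + (univ.filter fun i => r i = j).card)))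
  rw [Fintype.piFinset_univ] at hexp
  rw [← hexp]
  by_cases hr : Function.Bijective r
  · rw [if_pos hr]
    have hcard : ∀ j, (univ.filter fun i => r i = j).card = 1 := fun j => by
      rw [Finset.card_eq_one]
      exact ⟨(Equiv.ofBijective r hr).symm j, by
        ext i
        simp only [mem_filter, mem_univ, true_and, Finset.mem_singleton]
        constructor
        · intro h; rw [← h]; exact ((Equiv.ofBijective r hr).symm_apply_apply i).symm
        · intro h; rw [h]; exact (Equiv.ofBijective r hr).apply_symm_apply j⟩
    calc ∏ j : Fin m, ∑ b : Bool, sg b ^ (1 + (univ.filter fun i => r i = j).card)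
        = ∏ j : Fin m, (2:ℝ) := by
          refine Finset.prod_congr rfl fun j _ => ?_
          rw [sum_sg_pow, if_pos (by rw [hcard j]; exact odd_one)]
      _ = 2 ^ m := by simp
  · rw [if_neg hr]
    have : ∃ j, ¬ Odd (univ.filter fun i => r i = j).card := by
      by_contra hodd
      push_neg at hodd
      apply hr
      rw [Fintype.bijective_iff_surjective_and_card]
      refine ⟨fun j => ?_, rfl⟩
      have := hodd j
      rcases Finset.card_pos.mp (Nat.pos_of_ne_zero fun h0 => Nat.not_odd_zero (h0 ▸ this)) with ⟨i, hi⟩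
      simp only [mem_filter] at hi
      exact ⟨i, hi.2⟩
    obtain ⟨j, hj⟩ := this
    refine Finset.prod_eq_zero (Finset.mem_univ j) ?_
    rw [sum_sg_pow, if_neg hj]

lemma card_bijective (m : ℕ) :
    (univ.filter fun r : Fin m → Fin m => Function.Bijective r).card = m.factorial := by
  classical
  have e : Equiv.Perm (Fin m) ≃ {r : Fin m → Fin m // Function.Bijective r} :=
    { toFun := fun σ => ⟨σ, σ.bijective⟩
      invFun := fun r => Equiv.ofBijective r.1 r.2
      left_inv := fun σ => Equiv.ext fun x => rfl
      right_inv := fun r => rfl }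
  rw [← Fintype.card_subtype, ← Fintype.card_congr e, Fintype.card_perm, Fintype.card_fin]

lemma polarization {E : Type*} [NormedAddCommGroup E] [NormedSpace ℝ E] (m : ℕ)
    (L : ContinuousMultilinearMap ℝ (fun _ : Fin m => E) ℝ)
    (hsymm : ∀ (σ : Equiv.Perm (Fin m)) (v : Fin m → E), L (fun i => v (σ i)) = L v)
    (v : Fin m → E) :
    ∑ ε : Fin m → Bool, (∏ i, sg (ε i)) * L (fun _ => ∑ i, sg (ε i) • v i) =
      (2:ℝ) ^ m * (m.factorial : ℝ) * L v := by
  classical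
  have expand : ∀ ε : Fin m → Bool,
      L (fun _ => ∑ i, sg (ε i) • v i) =
        ∑ r : Fin m → Fin m, (∏ j, sg (ε (r j))) * L (fun j => v (r j)) := by
    intro ε
    have h0 : (L fun _ => ∑ i, sg (ε i) • v i) =
        ∑ r : Fin m → Fin m, L (fun j => sg (ε (r j)) • v (r j)) :=
      L.toMultilinearMap.map_sum (fun _ i => sg (ε i) • v i)
    rw [h0]
    refine Finset.sum_congr rfl fun r _ => ?_
    have := L.toMultilinearMap.map_smul_univ (fun j => sg (ε (r j))) (fun j => v (r j))
    simpa [smul_eq_mul] using this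
  calc ∑ ε : Fin m → Bool, (∏ i, sg (ε i)) * L (fun _ => ∑ i, sg (ε i) • v i)
      = ∑ ε : Fin m → Bool, ∑ r : Fin m → Fin m,
          (∏ i, sg (ε i)) * ((∏ j, sg (ε (r j))) * L (fun j => v (r j))) :=
        Finset.sum_congr rfl fun ε _ => by rw [expand ε, Finset.mul_sum]
    _ = ∑ r : Fin m → Fin m, ∑ ε : Fin m → Bool,
          ((∏ i, sg (ε i)) * ∏ j, sg (ε (r j))) * L (fun j => v (r j)) := by
        rw [Finset.sum_comm]
        exact Finset.sum_congr rfl fun r _ =>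
          Finset.sum_congr rfl fun ε _ => (mul_assoc _ _ _).symm
    _ = ∑ r : Fin m → Fin m, (∑ ε : Fin m → Bool,
          (∏ i, sg (ε i)) * ∏ j, sg (ε (r j))) * L (fun j => v (r j)) :=
        Finset.sum_congr rfl fun r _ => (Finset.sum_mul _ _ _).symm
    _ = ∑ r : Fin m → Fin m,
          (if Function.Bijective r then (2:ℝ) ^ m * L v else 0) := by
        refine Finset.sum_congr rfl fun r _ => ?_
        rw [sign_orthogonality m r]
        by_cases hr : Function.Bijective r
        · rw [if_pos hr, if_pos hr]
          congr 1
          exact hsymm (Equiv.ofBijective r hr) v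
        · rw [if_neg hr, if_neg hr, zero_mul]
    _ = (2:ℝ) ^ m * (m.factorial : ℝ) * L v := by
        rw [← Finset.sum_filter, Finset.sum_const, card_bijective, nsmul_eq_mul]
        ring

lemma gamma_step {x : ℝ} (hx : 0 < x)
    (h : (x / Real.exp 1) ^ x ≤ Real.Gamma (x + 1)) :
    ((x + 1) / Real.exp 1) ^ (x + 1) ≤ Real.Gamma (x + 1 + 1) := by
  have he : (0:ℝ) < Real.exp 1 := Real.exp_pos 1
  rw [Real.Gamma_add_one (by positivity)]
  have key : ((x + 1) / x) ^ x ≤ Real.exp 1 := by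
    have h1 : (x + 1) / x ≤ Real.exp (1 / x) := by
      have := Real.add_one_le_exp (1 / x)
      calc (x+1)/x = 1/x + 1 := by field_simp; ring
        _ ≤ Real.exp (1/x) := this
    calc ((x + 1) / x) ^ x ≤ (Real.exp (1/x)) ^ x :=
          Real.rpow_le_rpow (by positivity) h1 hx.le
      _ = Real.exp 1 := by
          rw [← Real.exp_one_rpow (1/x), ← Real.rpow_mul he.le,
            one_div_mul_cancel hx.ne', Real.rpow_one]
  have h2 : ((x + 1) / Real.exp 1) ^ (x + 1) ≤ (x + 1) * (x / Real.exp 1) ^ x := by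
    rw [Real.rpow_add (by positivity), Real.rpow_one]
    have h3 : ((x + 1) / Real.exp 1) ^ x ≤ Real.exp 1 * (x / Real.exp 1) ^ x := by
      have e1 : ((x + 1) / Real.exp 1) ^ x = ((x+1)/x) ^ x * (x / Real.exp 1) ^ x := by
        rw [← Real.mul_rpow (by positivity) (by positivity)]
        congr 1
        field_simp
      rw [e1]
      exact mul_le_mul_of_nonneg_right key (Real.rpow_nonneg (by positivity) x)
    calc ((x + 1) / Real.exp 1) ^ x * ((x + 1) / Real.exp 1)
        ≤ (Real.exp 1 * (x / Real.exp 1) ^ x) * ((x + 1) / Real.exp 1) :=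
          mul_le_mul_of_nonneg_right h3 (by positivity)
      _ = (x + 1) * (x / Real.exp 1) ^ x := by field_simp
  exact h2.trans (mul_le_mul_of_nonneg_left h (by positivity))

lemma gamma_base_half : ((1/2 : ℝ) / Real.exp 1) ^ (1/2 : ℝ) ≤ Real.Gamma (1/2 + 1) := by
  rw [Real.Gamma_add_one (by norm_num), Real.Gamma_one_half_eq]
  have hπ : (3:ℝ) ≤ Real.pi := Real.pi_gt_three.le
  have he : (2:ℝ) ≤ Real.exp 1 := by
    have := Real.add_one_le_exp 1; linarith
  have h4 : Real.sqrt 4 = 2 := by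
    rw [show (4:ℝ) = 2^2 by norm_num, Real.sqrt_sq (by norm_num)]
  have hL : ((1/2 : ℝ) / Real.exp 1) ^ (1/2 : ℝ) = Real.sqrt (1/(2 * Real.exp 1)) := by
    rw [Real.sqrt_eq_rpow, div_div]
  rw [hL]
  calc Real.sqrt (1/(2 * Real.exp 1)) ≤ Real.sqrt (Real.pi / 4) := by
        apply Real.sqrt_le_sqrt
        rw [div_le_div_iff₀ (by positivity) (by norm_num)]
        nlinarith
    _ = (1/2 : ℝ) * Real.sqrt Real.pi := by
        rw [Real.sqrt_div (by positivity : (0:ℝ) ≤ Real.pi) 4, h4]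
        ring

lemma pow_le_exp_aux (m : ℕ) (hm : 1 ≤ m) {t : ℝ} (ht : 0 ≤ t) :
    t ^ m ≤ ((m : ℝ) / Real.exp 1) ^ m * Real.exp t := by
  have hm' : (0:ℝ) < m := by exact_mod_cast hm
  rcases eq_or_lt_of_le ht with h0 | h0
  · rw [← h0, zero_pow (by omega)]
    positivity
  · have h1 : Real.log (t / m) ≤ t / m - 1 := Real.log_le_sub_one_of_pos (by positivity)
    have h2 : t ^ m = (m:ℝ) ^ m * (t / m) ^ m := by
      rw [← mul_pow]
      congr 1
      field_simp
    have h3 : (t / m) ^ m = Real.exp ((m:ℝ) * Real.log (t / m)) := by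
      rw [Real.exp_nat_mul, Real.exp_log (by positivity)]
    have h4 : Real.exp ((m:ℝ) * Real.log (t / m)) ≤ Real.exp (t - m) := by
      apply Real.exp_le_exp.mpr
      calc (m:ℝ) * Real.log (t/m) ≤ (m:ℝ) * (t/m - 1) :=
            mul_le_mul_of_nonneg_left h1 hm'.le
        _ = t - m := by field_simp
    calc t ^ m = (m:ℝ) ^ m * (t/m) ^ m := h2
      _ ≤ (m:ℝ) ^ m * Real.exp (t - m) := by
          rw [h3]; exact mul_le_mul_of_nonneg_left h4 (by positivity)
      _ = ((m : ℝ) / Real.exp 1) ^ m * Real.exp t := by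
          rw [Real.exp_sub, div_pow, Real.exp_one_pow]
          field_simp


lemma gamma_base_one : ((1:ℝ) / Real.exp 1) ^ (1:ℝ) ≤ Real.Gamma (1 + 1) := by
  rw [Real.rpow_one, Real.Gamma_add_one one_ne_zero, Real.Gamma_one, mul_one,
    div_le_one (Real.exp_pos 1)]
  have := Real.add_one_le_exp 1; linarith

lemma gamma_shift (x : ℝ) (hx : 0 < x)
    (hbase : (x / Real.exp 1) ^ x ≤ Real.Gamma (x + 1)) :
    ∀ j : ℕ, ((x + j) / Real.exp 1) ^ (x + j) ≤ Real.Gamma (x + j + 1) := by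
  intro j
  induction j with
  | zero => simpa using hbase
  | succ j ih =>
      have h := gamma_step (x := x + j) (by positivity) ih
      push_cast
      rw [show x + ((j:ℝ) + 1) = x + (j:ℝ) + 1 by ring]
      exact h

lemma gamma_lb (m : ℕ) (hm : 1 ≤ m) :
    ((m:ℝ) / (2 * Real.exp 1)) ^ ((m:ℝ)/2) ≤ Real.Gamma ((m:ℝ)/2 + 1) := by
  have key : (((m:ℝ)/2) / Real.exp 1) ^ ((m:ℝ)/2) ≤ Real.Gamma ((m:ℝ)/2 + 1) := by
    rcases Nat.even_or_odd m with ⟨j, hj⟩ | ⟨j, hj⟩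
    · obtain ⟨j', rfl⟩ : ∃ j', j = j' + 1 := ⟨j - 1, by omega⟩
      have h := gamma_shift 1 zero_lt_one gamma_base_one j'
      have hx : (m:ℝ)/2 = 1 + (j' : ℝ) := by subst hj; push_cast; ring
      rw [hx]; exact h
    · subst hj
      have h := gamma_shift (1/2) (by norm_num) gamma_base_half j
      have hx : ((2*j+1 : ℕ):ℝ)/2 = 1/2 + (j:ℝ) := by push_cast; ring
      rw [hx]; exact h
  rw [show ((m:ℝ) / (2 * Real.exp 1)) = ((m:ℝ)/2) / Real.exp 1 by ring]
  exact key

lemma const_ineq (m : ℕ) (hm : 2 ≤ m) :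
    2 * ((m:ℝ) / Real.exp 1) ^ m * Real.exp ((m:ℝ)/2) ≤
      (m:ℝ) * 2 ^ ((m:ℝ)/2) * Real.Gamma ((m:ℝ)/2) * (m:ℝ) ^ ((m:ℝ)/2) := by
  have hM : (0:ℝ) < m := by exact_mod_cast Nat.lt_of_lt_of_le Nat.zero_lt_two hm
  set M : ℝ := (m:ℝ) with hMdef
  set A := M ^ (M/2) with hA
  set B := (2:ℝ) ^ (M/2) with hB
  set C := Real.exp (M/2) with hC
  have hApos : 0 < A := Real.rpow_pos_of_pos hM _
  have hBpos : 0 < B := Real.rpow_pos_of_pos two_pos _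
  have hCpos : 0 < C := Real.exp_pos _
  have key : A ≤ M / 2 * Real.Gamma (M/2) * (B * C) := by
    have h1 := gamma_lb m (by omega)
    rw [Real.Gamma_add_one (by positivity)] at h1
    have h2 : (M / (2 * Real.exp 1)) ^ (M/2) = A / (B * C) := by
      rw [Real.div_rpow hM.le (by positivity), Real.mul_rpow (by norm_num) (Real.exp_pos 1).le,
        Real.exp_one_rpow]
    rw [h2, div_le_iff₀ (by positivity)] at h1
    exact h1
  have hMn : M ^ m = A * A := by
    rw [hA, ← Real.rpow_add hM, ← Real.rpow_natCast M m]
    congr 1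
    ring
  have hexp : Real.exp 1 ^ m = C * C := by
    rw [hC, ← Real.exp_add, Real.exp_one_pow]
    congr 1
    ring
  have lhs_eq : 2 * (M / Real.exp 1) ^ m * Real.exp (M/2) = 2 * A * A / C := by
    rw [div_pow, hMn, hexp, ← hC]
    field_simp
  rw [lhs_eq]
  calc 2 * A * A / C ≤ 2 * (M / 2 * Real.Gamma (M/2) * (B * C)) * A / C := by
        gcongr
    _ = M * B * Real.Gamma (M/2) * A := by field_simp


lemma mgf_bound {ι : Type*} [Fintype ι] [DecidableEq ι] (T : Finset ι) (μ : ℝ) :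
    ∑ ε : ι → Bool, Real.exp (μ * ∑ i ∈ T, sg (ε i)) ≤
      (2:ℝ) ^ (Fintype.card ι) * Real.exp ((T.card : ℝ) * μ^2 / 2) := by
  classical
  have step1 : ∀ ε : ι → Bool, Real.exp (μ * ∑ i ∈ T, sg (ε i)) =
      ∏ i, (if i ∈ T then Real.exp (μ * sg (ε i)) else 1) := by
    intro ε
    rw [Finset.mul_sum, Real.exp_sum]
    rw [← Finset.prod_subset (Finset.subset_univ T) (fun i _ hi => if_neg hi)]
    exact Finset.prod_congr rfl fun i hi => (if_pos hi).symm
  rw [Finset.sum_congr rfl fun ε _ => step1 ε]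
  have hexp := Finset.prod_univ_sum (fun _ : ι => (univ : Finset Bool))
    (fun i b => if i ∈ T then Real.exp (μ * sg b) else 1)
  rw [Fintype.piFinset_univ] at hexp
  rw [← hexp]
  have hsum : ∀ i : ι, (∑ b : Bool, if i ∈ T then Real.exp (μ * sg b) else 1) =
      if i ∈ T then 2 * Real.cosh μ else 2 := by
    intro i
    by_cases hi : i ∈ T
    · simp only [if_pos hi, Fintype.sum_bool, sg]
      rw [Real.cosh_eq]
      simp
      ring
    · simp [hi]
  rw [Finset.prod_congr rfl fun i _ => hsum i, Finset.prod_ite, Finset.prod_const,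
    Finset.prod_const, Finset.filter_univ_mem]
  have hcosh : Real.cosh μ ≤ Real.exp (μ^2/2) := Real.cosh_le_exp_half_sq μ
  have hcard : (univ.filter fun i => ¬ i ∈ T).card = Fintype.card ι - T.card := by
    rw [← Finset.card_compl]
    congr 1
    ext i
    simp
  rw [hcard]
  calc (2 * Real.cosh μ) ^ T.card * 2 ^ (Fintype.card ι - T.card)
      ≤ (2 * Real.exp (μ^2/2)) ^ T.card * 2 ^ (Fintype.card ι - T.card) := by
        refine mul_le_mul_of_nonneg_right (pow_le_pow_left₀ (by positivity) ?_ _) (by positivity)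
        linarith [Real.cosh_le_exp_half_sq μ]
    _ = 2 ^ (Fintype.card ι) * Real.exp ((T.card : ℝ) * μ^2 / 2) := by
        rw [mul_pow, ← Real.exp_nat_mul]
        have h2 : (2:ℝ) ^ T.card * 2 ^ (Fintype.card ι - T.card) = 2 ^ Fintype.card ι := by
          rw [← pow_add]
          congr 1
          have := Finset.card_le_univ T
          omega
        calc (2:ℝ) ^ T.card * Real.exp ((T.card : ℝ) * (μ^2/2)) * 2 ^ (Fintype.card ι - T.card)
            = ((2:ℝ) ^ T.card * 2 ^ (Fintype.card ι - T.card)) * Real.exp ((T.card:ℝ) * μ^2/2) := by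
              ring_nf
          _ = 2 ^ (Fintype.card ι) * Real.exp ((T.card : ℝ) * μ^2 / 2) := by rw [h2]



set_option maxHeartbeats 1000000 in
lemma moment_bound {ι : Type*} [Fintype ι] [DecidableEq ι] (T : Finset ι) (m : ℕ) (hm : 2 ≤ m) :
    ∑ ε : ι → Bool, |∑ i ∈ T, sg (ε i)| ^ m ≤
      (2:ℝ) ^ (Fintype.card ι) * ((m:ℝ) * 2 ^ ((m:ℝ)/2) * Real.Gamma ((m:ℝ)/2)) *
        (T.card : ℝ) ^ ((m:ℝ)/2) := by
  classical
  rcases Nat.eq_zero_or_pos T.card with hk | hk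
  · rw [Finset.card_eq_zero.mp hk]
    simp only [Finset.sum_empty, abs_zero, Finset.card_empty, Nat.cast_zero]
    rw [zero_pow (by omega), Real.zero_rpow (by positivity), Finset.sum_const, mul_zero]
    simp
  · set k := T.card with hkdef
    have hkR : (0:ℝ) < k := by exact_mod_cast hk
    have hmR : (0:ℝ) < m := by exact_mod_cast (by omega : 0 < m)
    set lam := Real.sqrt ((m:ℝ)/k) with hlam
    have hlam0 : 0 < lam := Real.sqrt_pos.mpr (by positivity)
    have hlamsq : lam ^ 2 = (m:ℝ)/k := Real.sq_sqrt (by positivity)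
    have hhalf : (k:ℝ) * lam^2 / 2 = (m:ℝ)/2 := by
      rw [hlamsq]; field_simp
    set D := ((m:ℝ) / Real.exp 1) ^ m with hD
    have hD0 : 0 < D := by positivity
    have hlm : lam ^ m = ((m:ℝ)/k) ^ ((m:ℝ)/2) := by
      rw [hlam, Real.sqrt_eq_rpow, ← Real.rpow_natCast (((m:ℝ)/k) ^ ((1:ℝ)/2)) m,
        ← Real.rpow_mul (by positivity)]
      congr 1
      ring
    clear_value k lam D
    have pointwise : ∀ ε : ι → Bool,
        |∑ i ∈ T, sg (ε i)| ^ m ≤ (D / lam ^ m) *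
          (Real.exp (lam * ∑ i ∈ T, sg (ε i)) + Real.exp (-lam * ∑ i ∈ T, sg (ε i))) := by
      intro ε
      set s := ∑ i ∈ T, sg (ε i) with hs
      have h1 : (lam * |s|) ^ m ≤ D * Real.exp (lam * |s|) := by
        rw [hD]; exact pow_le_exp_aux m (by omega) (by positivity)
      have h2 : Real.exp (lam * |s|) ≤ Real.exp (lam * s) + Real.exp (-lam * s) := by
        rcases abs_cases s with ⟨he, _⟩ | ⟨he, _⟩
        · rw [he]
          nlinarith [Real.exp_pos (-lam * s)]
        · rw [he, mul_neg, ← neg_mul]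
          nlinarith [Real.exp_pos (lam * s)]
      rw [mul_pow] at h1
      rw [div_mul_eq_mul_div, le_div_iff₀ (by positivity)]
      rw [show |s| ^ m * lam ^ m = lam ^ m * |s| ^ m by ring]
      calc lam ^ m * |s| ^ m ≤ D * Real.exp (lam * |s|) := h1
        _ ≤ D * (Real.exp (lam * s) + Real.exp (-lam * s)) :=
            mul_le_mul_of_nonneg_left h2 hD0.le
    calc ∑ ε : ι → Bool, |∑ i ∈ T, sg (ε i)| ^ m
        ≤ ∑ ε : ι → Bool, (D / lam ^ m) *
            (Real.exp (lam * ∑ i ∈ T, sg (ε i)) + Real.exp (-lam * ∑ i ∈ T, sg (ε i))) :=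
          Finset.sum_le_sum fun ε _ => pointwise ε
      _ = (D / lam ^ m) * ((∑ ε : ι → Bool, Real.exp (lam * ∑ i ∈ T, sg (ε i))) +
            ∑ ε : ι → Bool, Real.exp (-lam * ∑ i ∈ T, sg (ε i))) := by
          rw [← Finset.mul_sum, Finset.sum_add_distrib]
      _ ≤ (D / lam ^ m) * ((2:ℝ) ^ (Fintype.card ι) * Real.exp ((k:ℝ) * lam^2 / 2) +
            (2:ℝ) ^ (Fintype.card ι) * Real.exp ((k:ℝ) * lam^2 / 2)) := by
          have hmg1 := mgf_bound T lam
          have hmg2 := mgf_bound T (-lam)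
          rw [← hkdef] at hmg1 hmg2
          rw [neg_sq] at hmg2
          exact mul_le_mul_of_nonneg_left (add_le_add hmg1 hmg2) (by positivity)
      _ = 2 * D * Real.exp ((m:ℝ)/2) * ((k:ℝ) ^ ((m:ℝ)/2) / (m:ℝ) ^ ((m:ℝ)/2)) *
            (2:ℝ) ^ (Fintype.card ι) := by
          rw [hhalf, hlm, Real.div_rpow hmR.le hkR.le]
          have hk0 : ((k:ℝ)) ^ ((m:ℝ)/2) ≠ 0 := by positivity
          have hm0 : ((m:ℝ)) ^ ((m:ℝ)/2) ≠ 0 := by positivity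
          field_simp
          ring
      _ ≤ ((m:ℝ) * 2 ^ ((m:ℝ)/2) * Real.Gamma ((m:ℝ)/2) * (m:ℝ) ^ ((m:ℝ)/2)) *
            ((k:ℝ) ^ ((m:ℝ)/2) / (m:ℝ) ^ ((m:ℝ)/2)) * (2:ℝ) ^ (Fintype.card ι) := by
          have hc := const_ineq m hm
          rw [← hD] at hc
          exact mul_le_mul_of_nonneg_right (mul_le_mul_of_nonneg_right hc (by positivity))
            (by positivity)
      _ = (2:ℝ) ^ (Fintype.card ι) * ((m:ℝ) * 2 ^ ((m:ℝ)/2) * Real.Gamma ((m:ℝ)/2)) *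
            (k:ℝ) ^ ((m:ℝ)/2) := by
          have hm0 : ((m:ℝ)) ^ ((m:ℝ)/2) ≠ 0 := by positivity
          field_simp


section lpfacts
variable (p : ℝ≥0∞) [Fact (1 ≤ p)] (hp : p ≠ ∞)

-- norm of disjointly supported combination
lemma norm_comb (hq : 0 < p.toReal) {n : ℕ}
    (x : Fin n → lp (fun _ : ℕ => ℝ) p) (hx : ∀ j, ‖x j‖ = 1)
    (hdisj : ∀ j j', j ≠ j' → ∀ t : ℕ, x j t = 0 ∨ x j' t = 0)
    (c : Fin n → ℝ) :
    ‖∑ j, c j • x j‖ ^ p.toReal = ∑ j, |c j| ^ p.toReal := by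
  classical
  set q := p.toReal with hqdef
  set z : lp (fun _ : ℕ => ℝ) p := ∑ j, c j • x j with hz
  have hzt : ∀ t : ℕ, z t = ∑ j, c j * x j t := by
    intro t
    rw [hz, lp.coeFn_sum]
    simp only [Finset.sum_apply]
    exact Finset.sum_congr rfl fun j _ => by rw [lp.coeFn_smul]; rfl
  have pointwise : ∀ t : ℕ, ‖z t‖ ^ q = ∑ j, |c j| ^ q * ‖x j t‖ ^ q := by
    intro t
    rw [hzt t]
    simp only [Real.norm_eq_abs]
    by_cases hzero : ∀ j, x j t = 0
    · rw [Finset.sum_congr rfl fun j _ => by rw [hzero j, mul_zero],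
        Finset.sum_const, smul_zero, abs_zero, Real.zero_rpow hq.ne']
      rw [Finset.sum_congr rfl fun j _ => by
        rw [hzero j, abs_zero, Real.zero_rpow hq.ne', mul_zero]]
      simp
    · push_neg at hzero
      obtain ⟨j0, hj0⟩ := hzero
      have hothers : ∀ j, j ≠ j0 → x j t = 0 := fun j hj =>
        ((hdisj j j0 hj t).resolve_right hj0)
      rw [Finset.sum_eq_single j0 (fun j _ hj => by rw [hothers j hj, mul_zero])
        (fun h => absurd (Finset.mem_univ j0) h)]
      rw [Finset.sum_eq_single j0 (fun j _ hj => by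
          rw [hothers j hj, abs_zero, Real.zero_rpow hq.ne', mul_zero])
        (fun h => absurd (Finset.mem_univ j0) h)]
      rw [abs_mul, Real.mul_rpow (abs_nonneg _) (abs_nonneg _)]
  have h1 : HasSum (fun t : ℕ => ‖z t‖ ^ q) (‖z‖ ^ q) := lp.hasSum_norm hq z
  have h2 : HasSum (fun t : ℕ => ∑ j, |c j| ^ q * ‖x j t‖ ^ q) (∑ j, |c j| ^ q) := by
    have hterm : ∀ j : Fin n, HasSum (fun t : ℕ => |c j| ^ q * ‖x j t‖ ^ q) (|c j| ^ q) := by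
      intro j
      have := (lp.hasSum_norm hq (x j)).mul_left (|c j| ^ q)
      rwa [hx j, Real.one_rpow, mul_one] at this
    exact hasSum_sum fun j _ => hterm j
  exact h1.unique (h2.congr_fun pointwise)

end lpfacts


lemma sup_nonneg_and_bound (p : ℝ≥0∞) [Fact (1 ≤ p)] (m : ℕ) (hm : 0 < m)
    (L : ContinuousMultilinearMap ℝ (fun _ : Fin m => lp (fun _ : ℕ => ℝ) p) ℝ) :
    0 ≤ sSup {r : ℝ | ∃ z : lp (fun _ : ℕ => ℝ) p, ‖z‖ ≤ 1 ∧ r = |L (fun _ => z)|} ∧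
    ∀ z : lp (fun _ : ℕ => ℝ) p, |L (fun _ => z)| ≤
      sSup {r : ℝ | ∃ z : lp (fun _ : ℕ => ℝ) p, ‖z‖ ≤ 1 ∧ r = |L (fun _ => z)|} * ‖z‖ ^ m := by
  set Sset := {r : ℝ | ∃ z : lp (fun _ : ℕ => ℝ) p, ‖z‖ ≤ 1 ∧ r = |L (fun _ => z)|} with hSset
  have hbdd : BddAbove Sset := by
    refine ⟨‖L‖, ?_⟩
    rintro r ⟨z, hz, rfl⟩
    calc |L (fun _ => z)| = ‖L (fun _ => z)‖ := (Real.norm_eq_abs _).symm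
      _ ≤ ‖L‖ * ∏ _i : Fin m, ‖z‖ := L.le_opNorm _
      _ ≤ ‖L‖ * 1 := by
          refine mul_le_mul_of_nonneg_left ?_ (norm_nonneg L)
          exact Finset.prod_le_one (fun _ _ => norm_nonneg z) (fun _ _ => hz)
      _ = ‖L‖ := mul_one _
  have hLzero : L (fun _ => (0 : lp (fun _ : ℕ => ℝ) p)) = 0 :=
    L.map_coord_zero (⟨0, hm⟩ : Fin m) rfl
  have hmem : (0:ℝ) ∈ Sset := ⟨0, by simp, by rw [hLzero, abs_zero]⟩
  have hS0 : 0 ≤ sSup Sset := le_csSup hbdd hmem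
  refine ⟨hS0, fun z => ?_⟩
  by_cases hz0 : z = 0
  · rw [hz0, hLzero, abs_zero, norm_zero, zero_pow hm.ne', mul_zero]
  · have hc : 0 < ‖z‖ := norm_pos_iff.mpr hz0
    set u := ‖z‖⁻¹ • z with hu
    have hun : ‖u‖ = 1 := by
      rw [hu, norm_smul, norm_inv, norm_norm, inv_mul_cancel₀ hc.ne']
    have hrepr : (fun _ : Fin m => z) = fun _ : Fin m => ‖z‖ • u := by
      funext i
      rw [hu, smul_inv_smul₀ hc.ne']
    have hsmul : L (fun _ : Fin m => ‖z‖ • u) = (‖z‖ ^ m) • L (fun _ => u) := by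
      have := L.toMultilinearMap.map_smul_univ (fun _ : Fin m => ‖z‖) (fun _ => u)
      simpa using this
    rw [hrepr, hsmul, smul_eq_mul, abs_mul, abs_of_nonneg (pow_nonneg hc.le m)]
    have hLu : |L (fun _ => u)| ≤ sSup Sset := le_csSup hbdd ⟨u, hun.le, rfl⟩
    calc ‖z‖ ^ m * |L (fun _ => u)| ≤ ‖z‖ ^ m * sSup Sset :=
          mul_le_mul_of_nonneg_left hLu (pow_nonneg hc.le m)
      _ = sSup Sset * ‖z‖ ^ m := mul_comm _ _

lemma power_mean {n : ℕ} (hn : 0 < n) (a : Fin n → ℝ) (ha : ∀ j, 0 ≤ a j)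
    {t : ℝ} (ht : 1 ≤ t) :
    (∑ j, a j) ^ t ≤ (n:ℝ) ^ (t - 1) * ∑ j, a j ^ t := by
  have hnR : (0:ℝ) < n := by exact_mod_cast hn
  have h := Real.rpow_arith_mean_le_arith_mean_rpow Finset.univ (fun _ => 1/(n:ℝ)) a
    (fun _ _ => by positivity) (by simp [Finset.sum_const]; field_simp) (fun j _ => ha j) ht
  have hL : (∑ j, 1/(n:ℝ) * a j) ^ t = (1/(n:ℝ)) ^ t * (∑ j, a j) ^ t := by
    rw [← Finset.mul_sum, Real.mul_rpow (by positivity) (Finset.sum_nonneg fun j _ => ha j)]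
  have hR : (∑ j, 1/(n:ℝ) * a j ^ t) = 1/(n:ℝ) * ∑ j, a j ^ t := by
    rw [← Finset.mul_sum]
  rw [hL, hR] at h
  have hnt : (0:ℝ) < (n:ℝ) ^ t := Real.rpow_pos_of_pos hnR t
  have h1n : ((1:ℝ)/(n:ℝ)) ^ t = ((n:ℝ) ^ t)⁻¹ := by
    rw [one_div, Real.inv_rpow hnR.le]
  rw [h1n] at h
  calc (∑ j, a j) ^ t
      = (n:ℝ) ^ t * (((n:ℝ) ^ t)⁻¹ * (∑ j, a j) ^ t) := by
        field_simp
    _ ≤ (n:ℝ) ^ t * (1/(n:ℝ) * ∑ j, a j ^ t) := mul_le_mul_of_nonneg_left h hnt.le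
    _ = (n:ℝ) ^ (t - 1) * ∑ j, a j ^ t := by
        rw [Real.rpow_sub hnR, Real.rpow_one]
        field_simp



lemma ksum {n m : ℕ} (hm : 2 ≤ m) (k : Fin n → ℕ) (hsum : ∑ j, k j = m) :
    ∑ j, ((k j : ℝ)) ^ ((m:ℝ)/2) ≤ (m:ℝ) ^ ((m:ℝ)/2) := by
  have hmR : (0:ℝ) < m := by exact_mod_cast (by omega : 0 < m)
  have hexp0 : (0:ℝ) ≤ (m:ℝ)/2 - 1 := by
    have : (2:ℝ) ≤ m := by exact_mod_cast hm
    linarith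
  have step : ∀ j, ((k j : ℝ)) ^ ((m:ℝ)/2) ≤ (k j : ℝ) * (m:ℝ) ^ ((m:ℝ)/2 - 1) := by
    intro j
    rcases Nat.eq_zero_or_pos (k j) with h0 | hpos
    · rw [h0]
      simp only [Nat.cast_zero, zero_mul]
      rw [Real.zero_rpow (by positivity)]
    · have hkR : (0:ℝ) < k j := by exact_mod_cast hpos
      have hkm : (k j : ℝ) ≤ (m:ℝ) := by
        exact_mod_cast hsum ▸ Finset.single_le_sum (f := k) (fun _ _ => Nat.zero_le _)
          (Finset.mem_univ j)
      calc ((k j : ℝ)) ^ ((m:ℝ)/2)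
          = (k j : ℝ) ^ ((1:ℝ) + ((m:ℝ)/2 - 1)) := by norm_num
        _ = (k j : ℝ) * (k j : ℝ) ^ ((m:ℝ)/2 - 1) := by
            rw [Real.rpow_add hkR, Real.rpow_one]
        _ ≤ (k j : ℝ) * (m:ℝ) ^ ((m:ℝ)/2 - 1) :=
            mul_le_mul_of_nonneg_left (Real.rpow_le_rpow hkR.le hkm hexp0) hkR.le
  calc ∑ j, ((k j : ℝ)) ^ ((m:ℝ)/2)
      ≤ ∑ j, (k j : ℝ) * (m:ℝ) ^ ((m:ℝ)/2 - 1) := Finset.sum_le_sum fun j _ => step j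
    _ = (∑ j, (k j : ℝ)) * (m:ℝ) ^ ((m:ℝ)/2 - 1) := (Finset.sum_mul _ _ _).symm
    _ = (m:ℝ) * (m:ℝ) ^ ((m:ℝ)/2 - 1) := by
        congr 1
        exact_mod_cast congrArg (Nat.cast (R := ℝ)) hsum
    _ = (m:ℝ) ^ ((m:ℝ)/2) := by
        rw [show (m:ℝ) * (m:ℝ) ^ ((m:ℝ)/2 - 1) = (m:ℝ) ^ (1:ℝ) * (m:ℝ) ^ ((m:ℝ)/2 - 1) by
          rw [Real.rpow_one], ← Real.rpow_add hmR]
        norm_num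

end Stmt17

open ENNReal

/-- case `1 ≤ p < m` of the `ℓ^p` estimate:
`|L(x₁^{k₁} ⋯ x_n^{k_n})| ≤ (n^{(m-p)/p} m 2^{m/2} Γ(m/2) m^{m/2} / m!) ‖L̂‖`. -/
theorem stmt_17 (p : ℝ≥0∞) [Fact (1 ≤ p)] (hp : p ≠ ∞)
    (m n : ℕ) (hn : 0 < n) (hpm : p.toReal < (m : ℝ))
    (L : ContinuousMultilinearMap ℝ (fun _ : Fin m => lp (fun _ : ℕ => ℝ) p) ℝ)
    (hsymm : ∀ (σ : Equiv.Perm (Fin m)) (v : Fin m → lp (fun _ : ℕ => ℝ) p),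
      L (fun i => v (σ i)) = L v)
    (k : Fin n → ℕ) (hsum : ∑ j, k j = m)
    (x : Fin n → lp (fun _ : ℕ => ℝ) p) (hx : ∀ j, ‖x j‖ = 1)
    (hdisj : ∀ j j', j ≠ j' → ∀ t : ℕ, x j t = 0 ∨ x j' t = 0)
    (b : Fin m → Fin n)
    (hb : ∀ j, (Finset.univ.filter fun i => b i = j).card = k j) :
    |L (fun i => x (b i))| ≤
      (n : ℝ) ^ (((m : ℝ) - p.toReal) / p.toReal) * (m : ℝ) *
        2 ^ ((m : ℝ) / 2) * Real.Gamma ((m : ℝ) / 2) * (m : ℝ) ^ ((m : ℝ) / 2) /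
        (Nat.factorial m : ℝ) *
        sSup {r : ℝ | ∃ z : lp (fun _ : ℕ => ℝ) p, ‖z‖ ≤ 1 ∧ r = |L (fun _ => z)|} := by
  classical
  open Finset Stmt17 in
  set q := p.toReal with hqdef
  have hq1 : 1 ≤ q := by
    rw [hqdef, ← ENNReal.toReal_one]
    exact ENNReal.toReal_mono hp (Fact.out (p := 1 ≤ p))
  have hq0 : 0 < q := lt_of_lt_of_le one_pos hq1
  have hm1R : (1:ℝ) < m := lt_of_le_of_lt hq1 hpm
  have hm2 : 2 ≤ m := by exact_mod_cast (by exact_mod_cast hm1R : 1 < m)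
  have hm0 : 0 < m := by omega
  have hmR : (0:ℝ) < m := by positivity
  have hqm : q ≤ (m:ℝ) := hpm.le
  obtain ⟨hS0, hkey⟩ := sup_nonneg_and_bound p m hm0 L
  set S := sSup {r : ℝ | ∃ z : lp (fun _ : ℕ => ℝ) p, ‖z‖ ≤ 1 ∧ r = |L (fun _ => z)|}
    with hSdef
  set c : (Fin m → Bool) → Fin n → ℝ :=
    fun ε j => ∑ i ∈ Finset.univ.filter (fun i => b i = j), sg (ε i) with hc
  set zv : (Fin m → Bool) → lp (fun _ : ℕ => ℝ) p :=
    fun ε => ∑ j, c ε j • x j with hzv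
  have hcomb : ∀ ε : Fin m → Bool, ∑ i, sg (ε i) • x (b i) = zv ε := by
    intro ε
    rw [hzv]
    rw [← Finset.sum_fiberwise Finset.univ b (fun i => sg (ε i) • x (b i))]
    refine Finset.sum_congr rfl fun j _ => ?_
    rw [Finset.sum_congr rfl (fun i hi => by
      rw [(Finset.mem_filter.mp hi).2] :
      ∀ i ∈ Finset.univ.filter (fun i => b i = j), sg (ε i) • x (b i) = sg (ε i) • x j)]
    rw [← Finset.sum_smul, hc]
  have h2m : (0:ℝ) < 2 ^ m * (Nat.factorial m : ℝ) := by positivity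
  have hpol := polarization m L hsymm (fun i => x (b i))
  have hpol2 : ∑ ε : Fin m → Bool, (∏ i, sg (ε i)) * L (fun _ => zv ε) =
      (2:ℝ) ^ m * (Nat.factorial m : ℝ) * L (fun i => x (b i)) := by
    rw [← hpol]
    exact Finset.sum_congr rfl fun ε _ => by rw [← hcomb ε]
  have habs : (2:ℝ) ^ m * (Nat.factorial m : ℝ) * |L (fun i => x (b i))| ≤
      ∑ ε : Fin m → Bool, |L (fun _ => zv ε)| := by
    calc (2:ℝ) ^ m * (Nat.factorial m : ℝ) * |L (fun i => x (b i))|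
        = |(2:ℝ) ^ m * (Nat.factorial m : ℝ) * L (fun i => x (b i))| := by
          rw [abs_mul, abs_of_pos h2m]
      _ = |∑ ε : Fin m → Bool, (∏ i, sg (ε i)) * L (fun _ => zv ε)| := by rw [hpol2]
      _ ≤ ∑ ε : Fin m → Bool, |(∏ i, sg (ε i)) * L (fun _ => zv ε)| :=
          Finset.abs_sum_le_sum_abs _ _
      _ = ∑ ε : Fin m → Bool, |L (fun _ => zv ε)| := by
          refine Finset.sum_congr rfl fun ε _ => ?_
          rw [abs_mul, abs_prod]
          rw [Finset.prod_congr rfl fun i _ => abs_sg (ε i), Finset.prod_const_one, one_mul]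
  -- bound each |L̂(zv ε)|
  have hGpos : 0 < Real.Gamma ((m:ℝ)/2) := Real.Gamma_pos_of_pos (by positivity)
  have hperε : ∀ ε : Fin m → Bool, |L (fun _ => zv ε)| ≤
      S * ((n:ℝ) ^ ((m:ℝ)/q - 1) * ∑ j, |c ε j| ^ m) := by
    intro ε
    have hnc := norm_comb p hq0 x hx hdisj (c ε)
    have hzm : (‖zv ε‖ : ℝ) ^ m = (∑ j, |c ε j| ^ q) ^ ((m:ℝ)/q) := by
      rw [← hnc, ← Real.rpow_natCast ‖zv ε‖ m, ← Real.rpow_mul (norm_nonneg _)]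
      congr 1
      field_simp
      exact hqdef
    have hpm2 : (∑ j, |c ε j| ^ q) ^ ((m:ℝ)/q) ≤
        (n:ℝ) ^ ((m:ℝ)/q - 1) * ∑ j, |c ε j| ^ m := by
      have hpm1 := power_mean hn (fun j => |c ε j| ^ q)
        (fun j => Real.rpow_nonneg (abs_nonneg _) q) ((one_le_div hq0).mpr hqm)
      have heq : ∀ j : Fin n, (|c ε j| ^ q) ^ ((m:ℝ)/q) = |c ε j| ^ m := by
        intro j
        rw [← Real.rpow_natCast |c ε j| m, ← Real.rpow_mul (abs_nonneg _)]
        congr 1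
        field_simp
      calc (∑ j, |c ε j| ^ q) ^ ((m:ℝ)/q)
          ≤ (n:ℝ) ^ ((m:ℝ)/q - 1) * ∑ j, (|c ε j| ^ q) ^ ((m:ℝ)/q) := hpm1
        _ = (n:ℝ) ^ ((m:ℝ)/q - 1) * ∑ j, |c ε j| ^ m := by
            rw [Finset.sum_congr rfl fun j _ => heq j]
    calc |L (fun _ => zv ε)| ≤ S * ‖zv ε‖ ^ m := hkey (zv ε)
      _ = S * (∑ j, |c ε j| ^ q) ^ ((m:ℝ)/q) := by rw [hzm]
      _ ≤ S * ((n:ℝ) ^ ((m:ℝ)/q - 1) * ∑ j, |c ε j| ^ m) :=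
          mul_le_mul_of_nonneg_left hpm2 hS0
  -- moment bound
  have hmom : ∑ ε : Fin m → Bool, ∑ j, |c ε j| ^ m ≤
      (2:ℝ) ^ m * ((m:ℝ) * 2 ^ ((m:ℝ)/2) * Real.Gamma ((m:ℝ)/2)) * (m:ℝ) ^ ((m:ℝ)/2) := by
    rw [Finset.sum_comm]
    calc ∑ j, ∑ ε : Fin m → Bool, |c ε j| ^ m
        ≤ ∑ j, (2:ℝ) ^ m * ((m:ℝ) * 2 ^ ((m:ℝ)/2) * Real.Gamma ((m:ℝ)/2)) *
            ((k j : ℝ)) ^ ((m:ℝ)/2) := by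
          refine Finset.sum_le_sum fun j _ => ?_
          have hmb := moment_bound (Finset.univ.filter (fun i => b i = j)) m hm2
          rw [Fintype.card_fin, hb j] at hmb
          exact hmb
      _ = (2:ℝ) ^ m * ((m:ℝ) * 2 ^ ((m:ℝ)/2) * Real.Gamma ((m:ℝ)/2)) *
            ∑ j, ((k j : ℝ)) ^ ((m:ℝ)/2) := by rw [Finset.mul_sum]
      _ ≤ (2:ℝ) ^ m * ((m:ℝ) * 2 ^ ((m:ℝ)/2) * Real.Gamma ((m:ℝ)/2)) *
            (m:ℝ) ^ ((m:ℝ)/2) := by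
          refine mul_le_mul_of_nonneg_left (ksum hm2 k hsum) ?_
          positivity
  -- assemble
  have hsum2 : ∑ ε : Fin m → Bool, |L (fun _ => zv ε)| ≤
      S * ((n:ℝ) ^ ((m:ℝ)/q - 1) *
        ((2:ℝ) ^ m * ((m:ℝ) * 2 ^ ((m:ℝ)/2) * Real.Gamma ((m:ℝ)/2)) * (m:ℝ) ^ ((m:ℝ)/2))) := by
    calc ∑ ε : Fin m → Bool, |L (fun _ => zv ε)|
        ≤ ∑ ε : Fin m → Bool, S * ((n:ℝ) ^ ((m:ℝ)/q - 1) * ∑ j, |c ε j| ^ m) :=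
          Finset.sum_le_sum fun ε _ => hperε ε
      _ = S * ((n:ℝ) ^ ((m:ℝ)/q - 1) * ∑ ε : Fin m → Bool, ∑ j, |c ε j| ^ m) := by
          rw [← Finset.mul_sum, ← Finset.mul_sum]
      _ ≤ S * ((n:ℝ) ^ ((m:ℝ)/q - 1) *
            ((2:ℝ) ^ m * ((m:ℝ) * 2 ^ ((m:ℝ)/2) * Real.Gamma ((m:ℝ)/2)) *
              (m:ℝ) ^ ((m:ℝ)/2))) := by
          refine mul_le_mul_of_nonneg_left (mul_le_mul_of_nonneg_left hmom ?_) hS0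
          positivity
  have hfinal := le_trans habs hsum2
  have hexp : ((m:ℝ) - q) / q = (m:ℝ)/q - 1 := by
    rw [sub_div, div_self hq0.ne']
  rw [hexp]
  rw [mul_comm ((2:ℝ) ^ m * (Nat.factorial m : ℝ)) _] at hfinal
  rw [← le_div_iff₀ h2m] at hfinal
  refine hfinal.trans (le_of_eq ?_)
  have hfac : (Nat.factorial m : ℝ) ≠ 0 := by positivity
  field_simp
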